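/- For integers p > q > 0, the toric diagram 𝒴^{p,q} is not a parallelogram and admits no Minkowski decomposition 𝒴^{p,q} = A + B into two lattice polytopes with neither A nor B a single point; in particular, 𝒴^{p,q} admits no lattice maximal Minkowski decomposition. -/

import Mathlib

open Set Pointwise

noncomputable section

/-- We work in the plane `ℝ × ℝ`. -/
abbrev V : Type := ℝ × ℝ

/-- The embedding of the lattice `ℤ × ℤ` into the plane. -/
def toR (p : ℤ × ℤ) : V := ((p.1 : ℝ), (p.2 : ℝ))

/-- The set of lattice points of the plane. -/
def latticePoints : Set V := Set.range toR

/-- A lattice polytope: the convex hull of a nonempty finite set of lattice points. -/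
def IsLatticePolytope (P : Set V) : Prop :=
  ∃ S : Finset (ℤ × ℤ), S.Nonempty ∧ P = convexHull ℝ (toR '' ↑S)

/-- A toric diagram: a two-dimensional lattice polytope such that every lattice point on its
topological boundary is an extreme point. -/
def IsToricDiagram (P : Set V) : Prop :=
  IsLatticePolytope P ∧ (interior P).Nonempty ∧
    ∀ x ∈ frontier P, x ∈ latticePoints → x ∈ P.extremePoints ℝ

/-- A lattice segment: the convex hull of two distinct lattice points. -/
def IsLatticeSegment (L : Set V) : Prop :=
  ∃ a b : ℤ × ℤ, a ≠ b ∧ L = segment ℝ (toR a) (toR b)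

/-- A lattice triangle: the convex hull of three affinely independent lattice points. -/
def IsLatticeTriangle (T : Set V) : Prop :=
  ∃ a b c : ℤ × ℤ, AffineIndependent ℝ ![toR a, toR b, toR c] ∧
    T = convexHull ℝ {toR a, toR b, toR c}

/-- `E` is an edge of `P`: a maximal (nondegenerate) line segment contained in the
topological boundary of `P`. -/
def IsEdge (P E : Set V) : Prop :=
  (∃ a b : V, a ≠ b ∧ E = segment ℝ a b) ∧ E ⊆ frontier P ∧
    ∀ F : Set V, (∃ a b : V, F = segment ℝ a b) → F ⊆ frontier P → E ⊆ F → F = E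

/-- `v` is an edge vector of `P` (the difference of the endpoints of some edge of `P`). -/
def IsEdgeVector (P : Set V) (v : V) : Prop :=
  ∃ a b : V, a ≠ b ∧ IsEdge P (segment ℝ a b) ∧ v = b - a

/-- Two plane vectors are parallel when their cross product vanishes. -/
def Par (v w : V) : Prop := v.1 * w.2 = v.2 * w.1

/-- `P` admits a lattice maximal Minkowski decomposition: `P` is a Minkowski sum of at
least two lattice polytopes, each of which is a lattice segment or a lattice triangle. -/
def HasLatticeMaximalDecomposition (P : Set V) : Prop :=
  ∃ (m : ℕ) (Ps : Fin (m + 1) → Set V), 1 ≤ m ∧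
    P = ∑ k, Ps k ∧ ∀ k, IsLatticeSegment (Ps k) ∨ IsLatticeTriangle (Ps k)

/-- A convex polytope: the convex hull of a nonempty finite set of points. -/
def IsConvexPolytope (A : Set V) : Prop :=
  ∃ S : Finset V, S.Nonempty ∧ A = convexHull ℝ (↑S : Set V)

/-- `A` is a homothet `λ • P + t` (`λ > 0`) of `P`. -/
def IsHomothet (A P : Set V) : Prop :=
  ∃ (l : ℝ) (t : V), 0 < l ∧ A = (fun x => l • x + t) '' P

/-- A (nondegenerate) line segment. -/
def IsSegmentSet (A : Set V) : Prop := ∃ a b : V, a ≠ b ∧ A = segment ℝ a b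

/-- A triangle: the convex hull of three affinely independent points. -/
def IsTriangleSet (A : Set V) : Prop :=
  ∃ a b c : V, AffineIndependent ℝ ![a, b, c] ∧ A = convexHull ℝ {a, b, c}

/-- A convex polytope is Minkowski-indecomposable if in every Minkowski decomposition
into two convex polytopes, one of the summands is a point or a homothet of the polytope. -/
def MinkowskiIndecomposable (Q : Set V) : Prop :=
  ∀ A B : Set V, IsConvexPolytope A → IsConvexPolytope B → Q = A + B →
    (∃ x, A = {x}) ∨ IsHomothet A Q ∨ (∃ x, B = {x}) ∨ IsHomothet B Q

/-- A parallelogram: a quadrilateral whose vertices `v₁ v₂ v₃ v₄` in cyclic order satisfy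
`v₁ + v₃ = v₂ + v₄`. -/
def IsParallelogram (P : Set V) : Prop :=
  ∃ w : Fin 4 → V, Function.Injective w ∧ P.extremePoints ℝ = Set.range w ∧
    w 0 + w 2 = w 1 + w 3

/-- The Gauntlett–Martelli–Sparks–Waldram toric diagram `𝒴^{p,q}`. -/
def GMSW (p q : ℤ) : Set V :=
  convexHull ℝ (toR '' ({(0, 0), (1, 0), (p, p), (p - q - 1, p - q)} : Set (ℤ × ℤ)))

/-- Cross product of lattice vectors. -/
def crossZ (u w : ℤ × ℤ) : ℤ := u.1 * w.2 - u.2 * w.1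

set_option maxHeartbeats 1000000

namespace S15


def dot (n u : ℤ × ℤ) : ℤ := n.1 * u.1 + n.2 * u.2

lemma dot_add (n y z : ℤ × ℤ) : dot n (y + z) = dot n y + dot n z := by
  simp [dot]; ring

lemma toR_add (a b : ℤ × ℤ) : toR (a + b) = toR a + toR b := by
  simp [toR, Prod.ext_iff]

lemma toR_inj : Function.Injective toR := by
  rintro ⟨a1, a2⟩ ⟨b1, b2⟩ h
  simp [toR, Prod.ext_iff] at h ⊢
  exact_mod_cast h

def SupAt (U : Finset (ℤ × ℤ)) (n : ℤ × ℤ) (c : ℤ) : Prop :=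
  (∀ u ∈ U, dot n u ≤ c) ∧ ∃ u ∈ U, dot n u = c

def FaceSup (U : Finset (ℤ × ℤ)) (n : ℤ × ℤ) (h : ℤ) (d : ℤ × ℤ) (m : ℤ) : Prop :=
  (∀ u ∈ U, dot n u = h → dot d u ≤ m) ∧ ∃ u ∈ U, dot n u = h ∧ dot d u = m

lemma exists_supAt {U : Finset (ℤ × ℤ)} (hU : U.Nonempty) (n : ℤ × ℤ) : ∃ c, SupAt U n c := by
  obtain ⟨u, hu, hmax⟩ := U.exists_max_image (dot n) hU
  exact ⟨dot n u, hmax, u, hu, rfl⟩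

lemma SupAt.unique {U n c c'} (h : SupAt U n c) (h' : SupAt U n c') : c = c' := by
  obtain ⟨hb, u, hu, he⟩ := h
  obtain ⟨hb', u', hu', he'⟩ := h'
  exact le_antisymm (he ▸ hb' u hu) (he' ▸ hb u' hu')

lemma SupAt.add {S T : Finset (ℤ × ℤ)} {n a b} (hS : SupAt S n a) (hT : SupAt T n b) :
    SupAt (S + T) n (a + b) := by
  obtain ⟨hSb, s, hs, hes⟩ := hS
  obtain ⟨hTb, t, ht, het⟩ := hT
  refine ⟨?_, s + t, Finset.add_mem_add hs ht, by rw [dot_add, hes, het]⟩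
  intro u hu
  rw [Finset.mem_add] at hu
  obtain ⟨y, hy, z, hz, rfl⟩ := hu
  rw [dot_add]
  exact add_le_add (hSb y hy) (hTb z hz)

lemma exists_faceSup {U : Finset (ℤ × ℤ)} {n c} (h : SupAt U n c) (d : ℤ × ℤ) :
    ∃ m, FaceSup U n c d m := by
  obtain ⟨hb, u, hu, he⟩ := h
  have hne : (U.filter (fun u => dot n u = c)).Nonempty := ⟨u, Finset.mem_filter.2 ⟨hu, he⟩⟩
  obtain ⟨v, hv, hmax⟩ := (U.filter (fun u => dot n u = c)).exists_max_image (dot d) hne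
  rw [Finset.mem_filter] at hv
  refine ⟨dot d v, fun w hw hwc => hmax w (Finset.mem_filter.2 ⟨hw, hwc⟩), v, hv.1, hv.2, rfl⟩

lemma FaceSup.unique {U n c d m m'} (h : FaceSup U n c d m) (h' : FaceSup U n c d m') : m = m' := by
  obtain ⟨hb, u, hu, he, he2⟩ := h
  obtain ⟨hb', u', hu', he', he2'⟩ := h'
  exact le_antisymm (he2 ▸ hb' u hu he) (he2' ▸ hb u' hu' he')

lemma FaceSup.add {S T : Finset (ℤ × ℤ)} {n a b d mS mT}
    (hS : SupAt S n a) (hT : SupAt T n b)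
    (hfS : FaceSup S n a d mS) (hfT : FaceSup T n b d mT) :
    FaceSup (S + T) n (a + b) d (mS + mT) := by
  obtain ⟨hSb, _⟩ := hS
  obtain ⟨hTb, _⟩ := hT
  obtain ⟨hfSb, s, hs, hsc, hsd⟩ := hfS
  obtain ⟨hfTb, t, ht, htc, htd⟩ := hfT
  constructor
  · intro u hu huc
    rw [Finset.mem_add] at hu
    obtain ⟨y, hy, z, hz, rfl⟩ := hu
    rw [dot_add] at huc
    have hy' : dot n y = a := by
      have := hSb y hy; have := hTb z hz; omega
    have hz' : dot n z = b := by
      have := hSb y hy; have := hTb z hz; omega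
    rw [dot_add]
    exact add_le_add (hfSb y hy hy') (hfTb z hz hz')
  · exact ⟨s + t, Finset.add_mem_add hs ht, by rw [dot_add, hsc, htc], by rw [dot_add, hsd, htd]⟩

lemma FaceSup.nonneg {U : Finset (ℤ × ℤ)} {n : ℤ × ℤ} {c : ℤ} {d : ℤ × ℤ} {m m' : ℤ}
    (h : FaceSup U n c d m) (h' : FaceSup U n c (-d) m') :
    0 ≤ m + m' := by
  obtain ⟨hb, u, hu, he, he2⟩ := h
  obtain ⟨hb', _⟩ := h'
  have := hb' u hu he
  have hneg : dot (-d) u = -dot d u := by simp [dot]; try ring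
  omega

lemma hull_bound {X : Finset (ℤ × ℤ)} {n : ℤ × ℤ} {c : ℤ}
    (hb : ∀ u ∈ X, dot n u ≤ c) {z : V} (hz : z ∈ convexHull ℝ (toR '' (X : Set (ℤ × ℤ)))) :
    (n.1 : ℝ) * z.1 + (n.2 : ℝ) * z.2 ≤ (c : ℝ) := by
  have hlin : IsLinearMap ℝ (fun w : V => (n.1 : ℝ) * w.1 + (n.2 : ℝ) * w.2) := by
    constructor
    · intro a b; simp; ring
    · intro r a; simp; ring
  have hconv : Convex ℝ {w : V | (n.1 : ℝ) * w.1 + (n.2 : ℝ) * w.2 ≤ (c : ℝ)} :=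
    convex_halfSpace_le hlin _
  have hsub : convexHull ℝ (toR '' (X : Set (ℤ × ℤ))) ⊆ _ := convexHull_min ?_ hconv
  · exact hsub hz
  · rintro _ ⟨u, hu, rfl⟩
    simp only [toR, mem_setOf_eq]
    have := hb u hu
    simp only [dot] at this
    exact_mod_cast this

lemma supAt_transfer {X Y : Finset (ℤ × ℤ)} {n c c'}
    (hXY : convexHull ℝ (toR '' (X : Set (ℤ × ℤ))) = convexHull ℝ (toR '' (Y : Set (ℤ × ℤ))))
    (hX : SupAt X n c) (hY : SupAt Y n c') : c = c' := by
  obtain ⟨hbX, x, hx, hex⟩ := hX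
  obtain ⟨hbY, y, hy, hey⟩ := hY
  have h1 : (n.1 : ℝ) * (toR x).1 + (n.2 : ℝ) * (toR x).2 ≤ (c' : ℝ) := by
    apply hull_bound hbY
    rw [← hXY]
    exact subset_convexHull ℝ _ ⟨x, hx, rfl⟩
  have h2 : (n.1 : ℝ) * (toR y).1 + (n.2 : ℝ) * (toR y).2 ≤ (c : ℝ) := by
    apply hull_bound hbX
    rw [hXY]
    exact subset_convexHull ℝ _ ⟨y, hy, rfl⟩
  simp only [toR] at h1 h2
  have h1' : dot n x ≤ c' := by exact_mod_cast by push_cast [dot]; exact_mod_cast h1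
  have h2' : dot n y ≤ c := by exact_mod_cast by push_cast [dot]; exact_mod_cast h2
  omega

def pert (N : ℤ) (n d : ℤ × ℤ) : ℤ × ℤ := (N * n.1 + d.1, N * n.2 + d.2)

lemma dot_pert (N : ℤ) (n d u : ℤ × ℤ) : dot (pert N n d) u = N * dot n u + dot d u := by
  simp [dot, pert]; ring

lemma supAt_pert {U : Finset (ℤ × ℤ)} {n d : ℤ × ℤ} {a m Bp Bm N : ℤ}
    (h : SupAt U n a) (hf : FaceSup U n a d m)
    (hBp : ∀ u ∈ U, dot d u ≤ Bp) (hBm : ∀ u ∈ U, -Bm ≤ dot d u)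
    (hN : Bp + Bm + 1 ≤ N) : SupAt U (pert N n d) (N * a + m) := by
  obtain ⟨hb, _⟩ := h
  obtain ⟨hfb, w, hw, hwc, hwd⟩ := hf
  have hmlb : -Bm ≤ m := hwd ▸ hBm w hw
  have hBpw := hBp w hw
  constructor
  · intro u hu
    rw [dot_pert]
    rcases eq_or_lt_of_le (hb u hu) with he | hlt
    · rw [he]
      linarith [hfb u hu he]
    · have h1 : dot n u ≤ a - 1 := by omega
      have h2 : N * dot n u ≤ N * (a - 1) := by
        apply mul_le_mul_of_nonneg_left h1
        omega
      have h3 := hBp u hu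
      nlinarith
  · exact ⟨w, hw, by rw [dot_pert, hwc, hwd]⟩

lemma eq_of_two_dots {n d u v : ℤ × ℤ} (hc : crossZ n d = 1)
    (h1 : dot n u = dot n v) (h2 : dot d u = dot d v) : u = v := by
  simp only [dot, crossZ] at h1 h2 hc
  have e1 : u.1 = v.1 := by linear_combination d.2 * h1 - n.2 * h2 - (u.1 - v.1) * hc
  have e2 : u.2 = v.2 := by linear_combination n.1 * h2 - d.1 * h1 - (u.2 - v.2) * hc
  exact Prod.ext e1 e2

lemma faceSup_transfer {X Y : Finset (ℤ × ℤ)} {n d : ℤ × ℤ} {a m m'}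
    (hXY : convexHull ℝ (toR '' (X : Set (ℤ × ℤ))) = convexHull ℝ (toR '' (Y : Set (ℤ × ℤ))))
    (hXne : X.Nonempty) (hYne : Y.Nonempty)
    (hX : SupAt X n a) (hY : SupAt Y n a)
    (hfX : FaceSup X n a d m) (hfY : FaceSup Y n a d m') : m = m' := by
  obtain ⟨BpX, hBpX⟩ := exists_supAt hXne d
  obtain ⟨BmX, hBmX⟩ := exists_supAt hXne (-d)
  obtain ⟨BpY, hBpY⟩ := exists_supAt hYne d
  obtain ⟨BmY, hBmY⟩ := exists_supAt hYne (-d)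
  have hnegd : ∀ u : ℤ × ℤ, dot (-d) u = -dot d u := by intro u; simp [dot]; ring
  obtain ⟨wX, hwX, hwXe⟩ := hBpX.2
  have h1 : -BmX ≤ dot d wX := by have := hBmX.1 wX hwX; rw [hnegd] at this; omega
  obtain ⟨wY, hwY, hwYe⟩ := hBpY.2
  have h2 : -BmY ≤ dot d wY := by have := hBmY.1 wY hwY; rw [hnegd] at this; omega
  set N := BpX + BmX + BpY + BmY + 1 with hNdef
  have hX' : SupAt X (pert N n d) (N * a + m) :=
    supAt_pert (Bp := BpX) (Bm := BmX) hX hfX hBpX.1 (fun u hu => by have := hBmX.1 u hu; rw [hnegd] at this; omega)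
      (by omega)
  have hY' : SupAt Y (pert N n d) (N * a + m') :=
    supAt_pert (Bp := BpY) (Bm := BmY) hY hfY hBpY.1 (fun u hu => by have := hBmY.1 u hu; rw [hnegd] at this; omega)
      (by omega)
  have := supAt_transfer hXY hX' hY'
  omega

lemma dot_neg (d u : ℤ × ℤ) : dot (-d) u = -dot d u := by simp [dot]; try ring

lemma dot_add_left (n n' u : ℤ × ℤ) : dot (n + n') u = dot n u + dot n' u := by
  simp [dot]; ring

/-- Edge analysis: on each (primitive) edge of the big polytope, one of the two summands
has a singleton face. -/
lemma edge_split {S T W : Finset (ℤ × ℤ)} {n e : ℤ × ℤ} {h mx mn : ℤ}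
    (hull : convexHull ℝ (toR '' ((S + T : Finset (ℤ × ℤ)) : Set (ℤ × ℤ)))
      = convexHull ℝ (toR '' (W : Set (ℤ × ℤ))))
    (hSne : S.Nonempty) (hTne : T.Nonempty)
    (hWsup : SupAt W n h) (hWfx : FaceSup W n h e mx) (hWfn : FaceSup W n h (-e) mn)
    (hsum : mx + mn = 1) (hcross : crossZ n e = 1)
    {a b : ℤ} (hSa : SupAt S n a) (hTb : SupAt T n b) :
    (∀ u ∈ S, ∀ v ∈ S, dot n u = a → dot n v = a → u = v) ∨
    (∀ u ∈ T, ∀ v ∈ T, dot n u = b → dot n v = b → u = v) := by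
  have hUne : (S + T).Nonempty := hSne.add hTne
  have hUsup : SupAt (S + T) n (a + b) := hSa.add hTb
  have hWne : W.Nonempty := by
    obtain ⟨_, u, hu, _⟩ := hWsup; exact ⟨u, hu⟩
  have hab : a + b = h := supAt_transfer hull hUsup hWsup
  obtain ⟨msx, hmsx⟩ := exists_faceSup hSa e
  obtain ⟨msn, hmsn⟩ := exists_faceSup hSa (-e)
  obtain ⟨mtx, hmtx⟩ := exists_faceSup hTb e
  obtain ⟨mtn, hmtn⟩ := exists_faceSup hTb (-e)
  have hUfx : FaceSup (S + T) n (a + b) e (msx + mtx) := FaceSup.add hSa hTb hmsx hmtx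
  have hUfn : FaceSup (S + T) n (a + b) (-e) (msn + mtn) := FaceSup.add hSa hTb hmsn hmtn
  have hx : msx + mtx = mx := faceSup_transfer hull hUne hWne (hab ▸ hUsup) hWsup
    (hab ▸ hUfx) hWfx
  have hn : msn + mtn = mn := faceSup_transfer hull hUne hWne (hab ▸ hUsup) hWsup
    (hab ▸ hUfn) hWfn
  have hSext : 0 ≤ msx + msn := FaceSup.nonneg hmsx hmsn
  have hText : 0 ≤ mtx + mtn := FaceSup.nonneg hmtx hmtn
  have hcase : msx + msn = 0 ∨ mtx + mtn = 0 := by omega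
  rcases hcase with hc | hc
  · left
    intro u hu v hv hun hvn
    have h1 : dot e u ≤ msx := hmsx.1 u hu hun
    have h2 : dot (-e) u ≤ msn := hmsn.1 u hu hun
    have h3 : dot e v ≤ msx := hmsx.1 v hv hvn
    have h4 : dot (-e) v ≤ msn := hmsn.1 v hv hvn
    rw [dot_neg] at h2 h4
    have : dot e u = dot e v := by omega
    exact eq_of_two_dots hcross (hun.trans hvn.symm) this
  · right
    intro u hu v hv hun hvn
    have h1 : dot e u ≤ mtx := hmtx.1 u hu hun
    have h2 : dot (-e) u ≤ mtn := hmtn.1 u hu hun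
    have h3 : dot e v ≤ mtx := hmtx.1 v hv hvn
    have h4 : dot (-e) v ≤ mtn := hmtn.1 v hv hvn
    rw [dot_neg] at h2 h4
    have : dot e u = dot e v := by omega
    exact eq_of_two_dots hcross (hun.trans hvn.symm) this

/-- Vertex analysis: at a vertex of the big polytope, both summands have distinguished
points adding up to the vertex and maximizing the two adjacent edge functionals. -/
lemma vertex_split {S T W : Finset (ℤ × ℤ)} {n n' : ℤ × ℤ} {h h' : ℤ} {A : ℤ × ℤ}
    (hull : convexHull ℝ (toR '' ((S + T : Finset (ℤ × ℤ)) : Set (ℤ × ℤ)))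
      = convexHull ℝ (toR '' (W : Set (ℤ × ℤ))))
    (hSne : S.Nonempty) (hTne : T.Nonempty)
    (hWsup : SupAt W n h) (hWsup' : SupAt W n' h')
    (hAW : A ∈ W) (hA : dot n A = h) (hA' : dot n' A = h')
    (huniq : ∀ u ∈ W, dot (n + n') u = h + h' → u = A)
    {a a' b b' : ℤ} (hSa : SupAt S n a) (hSa' : SupAt S n' a')
    (hTb : SupAt T n b) (hTb' : SupAt T n' b') :
    ∃ s t, s ∈ S ∧ t ∈ T ∧ s + t = A ∧
      dot n s = a ∧ dot n' s = a' ∧ dot n t = b ∧ dot n' t = b' := by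
  have hUne : (S + T).Nonempty := hSne.add hTne
  have hWne : W.Nonempty := ⟨A, hAW⟩
  have hab : a + b = h := supAt_transfer hull (hSa.add hTb) hWsup
  have hab' : a' + b' = h' := supAt_transfer hull (hSa'.add hTb') hWsup'
  -- sup of W at n + n'
  have hWc : SupAt W (n + n') (h + h') := by
    refine ⟨fun u hu => ?_, A, hAW, by rw [dot_add_left, hA, hA']⟩
    rw [dot_add_left]
    exact add_le_add (hWsup.1 u hu) (hWsup'.1 u hu)
  obtain ⟨c, hSc⟩ := exists_supAt hSne (n + n')
  obtain ⟨c', hTc⟩ := exists_supAt hTne (n + n')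
  have hcc : c + c' = h + h' := supAt_transfer hull (hSc.add hTc) hWc
  have hcle : c ≤ a + a' := by
    obtain ⟨_, u, hu, he⟩ := hSc
    rw [dot_add_left] at he
    have := hSa.1 u hu; have := hSa'.1 u hu; omega
  have hcle' : c' ≤ b + b' := by
    obtain ⟨_, u, hu, he⟩ := hTc
    rw [dot_add_left] at he
    have := hTb.1 u hu; have := hTb'.1 u hu; omega
  have hceq : c = a + a' := by omega
  have hceq' : c' = b + b' := by omega
  have hUsup : SupAt (S + T) (n + n') (h + h') := by
    have := hSc.add hTc; rwa [hcc] at this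
  obtain ⟨hbS, s, hs, hes⟩ := hSc
  obtain ⟨hbT, t, ht, het⟩ := hTc
  rw [dot_add_left] at hes het
  have hsn : dot n s = a := by have := hSa.1 s hs; have := hSa'.1 s hs; omega
  have hsn' : dot n' s = a' := by have := hSa.1 s hs; have := hSa'.1 s hs; omega
  have htn : dot n t = b := by have := hTb.1 t ht; have := hTb'.1 t ht; omega
  have htn' : dot n' t = b' := by have := hTb.1 t ht; have := hTb'.1 t ht; omega
  -- the face of W at n + n' is the single vertex A, hence s + t = A
  have hWfx1 : FaceSup W (n + n') (h + h') (1, 0) A.1 :=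
    ⟨fun u hu hc => by rw [huniq u hu hc]; simp [dot], A, hAW,
      by rw [dot_add_left, hA, hA'], by simp [dot]⟩
  have hWfx2 : FaceSup W (n + n') (h + h') (-(1, 0)) (-A.1) :=
    ⟨fun u hu hc => by rw [huniq u hu hc]; simp [dot], A, hAW,
      by rw [dot_add_left, hA, hA'], by simp [dot]⟩
  have hWfy1 : FaceSup W (n + n') (h + h') (0, 1) A.2 :=
    ⟨fun u hu hc => by rw [huniq u hu hc]; simp [dot], A, hAW,
      by rw [dot_add_left, hA, hA'], by simp [dot]⟩
  have hWfy2 : FaceSup W (n + n') (h + h') (-(0, 1)) (-A.2) :=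
    ⟨fun u hu hc => by rw [huniq u hu hc]; simp [dot], A, hAW,
      by rw [dot_add_left, hA, hA'], by simp [dot]⟩
  obtain ⟨mx1, hmx1⟩ := exists_faceSup hUsup (1, 0)
  obtain ⟨mx2, hmx2⟩ := exists_faceSup hUsup (-(1, 0))
  obtain ⟨my1, hmy1⟩ := exists_faceSup hUsup (0, 1)
  obtain ⟨my2, hmy2⟩ := exists_faceSup hUsup (-(0, 1))
  have hWne' : W.Nonempty := hWne
  have e1 : mx1 = A.1 := faceSup_transfer hull hUne hWne hUsup hWc hmx1 hWfx1
  have e2 : mx2 = -A.1 := faceSup_transfer hull hUne hWne hUsup hWc hmx2 hWfx2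
  have e3 : my1 = A.2 := faceSup_transfer hull hUne hWne hUsup hWc hmy1 hWfy1
  have e4 : my2 = -A.2 := faceSup_transfer hull hUne hWne hUsup hWc hmy2 hWfy2
  have hmem : s + t ∈ S + T := Finset.add_mem_add hs ht
  have hface : dot (n + n') (s + t) = h + h' := by
    rw [dot_add, dot_add_left, dot_add_left]; omega
  have hx1 := hmx1.1 _ hmem hface
  have hx2 := hmx2.1 _ hmem hface
  have hy1 := hmy1.1 _ hmem hface
  have hy2 := hmy2.1 _ hmem hface
  rw [dot_neg] at hx2 hy2
  have hstA : s + t = A := by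
    have hfst : (s + t).1 = A.1 := by simp [dot, Prod.fst_add] at hx1 hx2 ⊢; omega
    have hsnd : (s + t).2 = A.2 := by simp [dot, Prod.snd_add] at hy1 hy2 ⊢; omega
    exact Prod.ext hfst hsnd
  exact ⟨s, t, hs, ht, hstA, hsn, hsn', htn, htn'⟩

def Vs (p q : ℤ) : Finset (ℤ × ℤ) := {(0,0),(1,0),(p,p),(p-q-1,p-q)}

lemma mem_Vs {p q : ℤ} {u : ℤ × ℤ} :
    u ∈ Vs p q ↔ u = (0,0) ∨ u = (1,0) ∨ u = (p,p) ∨ u = (p-q-1,p-q) := by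
  simp [Vs]

section comps
variable {p q : ℤ}

lemma sup1 (hq : 0 < q) (hpq : q < p) : SupAt (Vs p q) (0,-1) 0 := by
  constructor
  · intro u hu
    rw [mem_Vs] at hu
    rcases hu with rfl|rfl|rfl|rfl <;> simp [dot] <;> nlinarith
  · exact ⟨(0,0), by rw [mem_Vs]; tauto, by simp [dot]⟩

lemma sup2 (hq : 0 < q) (hpq : q < p) : SupAt (Vs p q) (p,1-p) p := by
  constructor
  · intro u hu
    rw [mem_Vs] at hu
    rcases hu with rfl|rfl|rfl|rfl <;> simp [dot] <;> nlinarith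
  · exact ⟨(1,0), by rw [mem_Vs]; tauto, by simp [dot]⟩

lemma sup3 (hq : 0 < q) (hpq : q < p) : SupAt (Vs p q) (-q,q+1) p := by
  constructor
  · intro u hu
    rw [mem_Vs] at hu
    rcases hu with rfl|rfl|rfl|rfl <;> simp [dot] <;> nlinarith
  · exact ⟨(p,p), by rw [mem_Vs]; tauto, by simp [dot]; try ring⟩

lemma sup4 (hq : 0 < q) (hpq : q < p) : SupAt (Vs p q) (q-p,p-q-1) 0 := by
  constructor
  · intro u hu
    rw [mem_Vs] at hu
    rcases hu with rfl|rfl|rfl|rfl <;> simp [dot] <;> nlinarith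
  · exact ⟨(0,0), by rw [mem_Vs]; tauto, by simp [dot]⟩

lemma fx1 (hq : 0 < q) (hpq : q < p) : FaceSup (Vs p q) (0,-1) 0 (1,0) 1 := by
  constructor
  · intro u hu hc
    rw [mem_Vs] at hu
    rcases hu with rfl|rfl|rfl|rfl <;> simp [dot] at hc ⊢ <;> omega
  · exact ⟨(1,0), by rw [mem_Vs]; tauto, by simp [dot], by simp [dot]⟩

lemma fn1 (hq : 0 < q) (hpq : q < p) : FaceSup (Vs p q) (0,-1) 0 (-(1,0)) 0 := by
  constructor
  · intro u hu hc
    rw [mem_Vs] at hu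
    rcases hu with rfl|rfl|rfl|rfl <;> simp [dot] at hc ⊢ <;> omega
  · exact ⟨(0,0), by rw [mem_Vs]; tauto, by simp [dot], by simp [dot]⟩

lemma fx2 (hq : 0 < q) (hpq : q < p) : FaceSup (Vs p q) (p,1-p) p (-1,1) 0 := by
  constructor
  · intro u hu hc
    rw [mem_Vs] at hu
    rcases hu with rfl|rfl|rfl|rfl <;> simp [dot] at hc ⊢ <;> ring_nf (config := { ifUnchanged := .silent }) at hc ⊢ <;> omega
  · exact ⟨(p,p), by rw [mem_Vs]; tauto, by simp [dot]; try ring, by simp [dot]⟩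

lemma fn2 (hq : 0 < q) (hpq : q < p) : FaceSup (Vs p q) (p,1-p) p (-(-1,1)) 1 := by
  constructor
  · intro u hu hc
    rw [mem_Vs] at hu
    rcases hu with rfl|rfl|rfl|rfl <;> simp [dot] at hc ⊢ <;> ring_nf at hc ⊢ <;> omega
  · exact ⟨(1,0), by rw [mem_Vs]; tauto, by simp [dot], by simp [dot]⟩

lemma fx3 (hq : 0 < q) (hpq : q < p) : FaceSup (Vs p q) (-q,q+1) p (-1,1) 1 := by
  constructor
  · intro u hu hc
    rw [mem_Vs] at hu
    rcases hu with rfl|rfl|rfl|rfl <;> simp [dot] at hc ⊢ <;> ring_nf at hc ⊢ <;> omega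
  · exact ⟨(p-q-1,p-q), by rw [mem_Vs]; tauto, by simp [dot]; try ring, by simp [dot]; try ring⟩

lemma fn3 (hq : 0 < q) (hpq : q < p) : FaceSup (Vs p q) (-q,q+1) p (-(-1,1)) 0 := by
  constructor
  · intro u hu hc
    rw [mem_Vs] at hu
    rcases hu with rfl|rfl|rfl|rfl <;> simp [dot] at hc ⊢ <;> ring_nf (config := { ifUnchanged := .silent }) at hc ⊢ <;> omega
  · exact ⟨(p,p), by rw [mem_Vs]; tauto, by simp [dot]; try ring, by simp [dot]⟩

lemma fx4 (hq : 0 < q) (hpq : q < p) : FaceSup (Vs p q) (q-p,p-q-1) 0 (1,-1) 0 := by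
  constructor
  · intro u hu hc
    rw [mem_Vs] at hu
    rcases hu with rfl|rfl|rfl|rfl <;> simp [dot] at hc ⊢ <;> ring_nf (config := { ifUnchanged := .silent }) at hc ⊢ <;> omega
  · exact ⟨(0,0), by rw [mem_Vs]; tauto, by simp [dot], by simp [dot]⟩

lemma fn4 (hq : 0 < q) (hpq : q < p) : FaceSup (Vs p q) (q-p,p-q-1) 0 (-(1,-1)) 1 := by
  constructor
  · intro u hu hc
    rw [mem_Vs] at hu
    rcases hu with rfl|rfl|rfl|rfl <;> simp [dot] at hc ⊢ <;> ring_nf at hc ⊢ <;> omega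
  · exact ⟨(p-q-1,p-q), by rw [mem_Vs]; tauto, by simp [dot]; try ring, by simp [dot]; try ring⟩

lemma uniq1 (hq : 0 < q) (hpq : q < p) : ∀ u ∈ Vs p q, dot ((q-p,p-q-1) + (0,-1)) u = 0 + 0 → u = (0,0) := by
  intro u hu hc
  rw [mem_Vs] at hu
  rcases hu with rfl|rfl|rfl|rfl <;> simp [Prod.mk_add_mk, dot] at hc ⊢ <;>
    ring_nf (config := { ifUnchanged := .silent }) at hc ⊢ <;> omega

lemma uniq2 (hq : 0 < q) (hpq : q < p) : ∀ u ∈ Vs p q, dot ((0,-1) + (p,1-p)) u = 0 + p → u = (1,0) := by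
  intro u hu hc
  rw [mem_Vs] at hu
  rcases hu with rfl|rfl|rfl|rfl <;> simp [Prod.mk_add_mk, dot] at hc ⊢ <;>
    ring_nf (config := { ifUnchanged := .silent }) at hc ⊢ <;> omega

lemma uniq3 (hq : 0 < q) (hpq : q < p) : ∀ u ∈ Vs p q, dot ((p,1-p) + (-q,q+1)) u = p + p → u = (p,p) := by
  intro u hu hc
  rw [mem_Vs] at hu
  rcases hu with rfl|rfl|rfl|rfl <;> simp [Prod.mk_add_mk, dot] at hc ⊢ <;>
    ring_nf at hc ⊢ <;> omega

lemma uniq4 (hq : 0 < q) (hpq : q < p) : ∀ u ∈ Vs p q, dot ((-q,q+1) + (q-p,p-q-1)) u = p + 0 → u = (p-q-1,p-q) := by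
  intro u hu hc
  rw [mem_Vs] at hu
  rcases hu with rfl|rfl|rfl|rfl <;> simp [Prod.mk_add_mk, dot] at hc ⊢ <;>
    ring_nf at hc ⊢ <;> omega

end comps
lemma pin_down {q : ℤ} (hq : 0 < q) {u s : ℤ × ℤ}
    (h1 : dot (0,-1) u = dot (0,-1) s) (h3 : dot (-q,q+1) u = dot (-q,q+1) s) : u = s := by
  simp [dot] at h1 h3
  have h2 : u.2 = s.2 := by omega
  have h4 : q * u.1 = q * s.1 := by linear_combination (-1) * h3 + (q + 1) * h2
  have h5 : u.1 = s.1 := mul_left_cancel₀ (by omega) h4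
  exact Prod.ext h5 h2


lemma key_lemma {p q : ℤ} (hq : 0 < q) (hpq : q < p) (s1 s2 s3 s4 t1 t2 t3 t4 : ℤ × ℤ)
    (hst1 : s1 + t1 = ((0:ℤ),(0:ℤ))) (hst2 : s2 + t2 = ((1:ℤ),(0:ℤ)))
    (hst3 : s3 + t3 = ((p:ℤ),(p:ℤ))) (hst4 : s4 + t4 = ((p-q-1:ℤ),(p-q:ℤ)))
    (E1 : s1 = s2 ∨ t1 = t2) (E2 : s2 = s3 ∨ t2 = t3)
    (E3 : s3 = s4 ∨ t3 = t4) (E4 : s4 = s1 ∨ t4 = t1) :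
    (s1 = s2 ∧ s2 = s3 ∧ s3 = s4) ∨ (t1 = t2 ∧ t2 = t3 ∧ t3 = t4) := by
  rw [Prod.ext_iff] at hst1 hst2 hst3 hst4
  simp only [Prod.fst_add, Prod.snd_add] at hst1 hst2 hst3 hst4
  simp only [Prod.ext_iff] at E1 E2 E3 E4 ⊢
  omega

lemma dominated_eq {p q : ℤ} (hq : 0 < q) {u s : ℤ × ℤ}
    (g1 : dot (0,-1) u ≤ dot (0,-1) s) (g2 : dot (p,1-p) u ≤ dot (p,1-p) s)
    (g3 : dot (-q,q+1) u ≤ dot (-q,q+1) s)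
    (g4 : dot (q-p,p-q-1) u ≤ dot (q-p,p-q-1) s) : u = s := by
  have hzu : dot (0,-1) u + dot (p,1-p) u + dot (-q,q+1) u + dot (q-p,p-q-1) u = 0 := by
    simp [dot]; ring
  have hzs : dot (0,-1) s + dot (p,1-p) s + dot (-q,q+1) s + dot (q-p,p-q-1) s = 0 := by
    simp [dot]; ring
  have e1 : dot (0,-1) u = dot (0,-1) s := by omega
  have e3 : dot (-q,q+1) u = dot (-q,q+1) s := by omega
  exact pin_down hq e1 e3

/-- Core decomposition theorem: if the hull of `S + T` is `𝒴^{p,q}`, then `S` or `T`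
is a subsingleton. -/
lemma decomp_core {p q : ℤ} (hq : 0 < q) (hpq : q < p) {S T : Finset (ℤ × ℤ)}
    (hSne : S.Nonempty) (hTne : T.Nonempty)
    (hull : convexHull ℝ (toR '' ((S + T : Finset (ℤ × ℤ)) : Set (ℤ × ℤ)))
      = convexHull ℝ (toR '' ((Vs p q) : Set (ℤ × ℤ)))) :
    (∀ u ∈ S, ∀ v ∈ S, u = v) ∨ (∀ u ∈ T, ∀ v ∈ T, u = v) := by
  obtain ⟨a1, ha1⟩ := exists_supAt hSne ((0:ℤ),(-1:ℤ))
  obtain ⟨a2, ha2⟩ := exists_supAt hSne ((p:ℤ),(1-p:ℤ))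
  obtain ⟨a3, ha3⟩ := exists_supAt hSne ((-q:ℤ),(q+1:ℤ))
  obtain ⟨a4, ha4⟩ := exists_supAt hSne ((q-p:ℤ),(p-q-1:ℤ))
  obtain ⟨b1, hb1⟩ := exists_supAt hTne ((0:ℤ),(-1:ℤ))
  obtain ⟨b2, hb2⟩ := exists_supAt hTne ((p:ℤ),(1-p:ℤ))
  obtain ⟨b3, hb3⟩ := exists_supAt hTne ((-q:ℤ),(q+1:ℤ))
  obtain ⟨b4, hb4⟩ := exists_supAt hTne ((q-p:ℤ),(p-q-1:ℤ))
  -- vertex decompositions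
  obtain ⟨s1, t1, hs1S, ht1T, hst1, hs1n4, hs1n1, ht1n4, ht1n1⟩ :=
    vertex_split (A := ((0:ℤ),(0:ℤ))) hull hSne hTne (sup4 hq hpq) (sup1 hq hpq)
      (by rw [mem_Vs]; tauto) (by simp [dot]) (by simp [dot])
      (uniq1 hq hpq) ha4 ha1 hb4 hb1
  obtain ⟨s2, t2, hs2S, ht2T, hst2, hs2n1, hs2n2, ht2n1, ht2n2⟩ :=
    vertex_split (A := ((1:ℤ),(0:ℤ))) hull hSne hTne (sup1 hq hpq) (sup2 hq hpq)
      (by rw [mem_Vs]; tauto) (by simp [dot]) (by simp [dot])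
      (uniq2 hq hpq) ha1 ha2 hb1 hb2
  obtain ⟨s3, t3, hs3S, ht3T, hst3, hs3n2, hs3n3, ht3n2, ht3n3⟩ :=
    vertex_split (A := ((p:ℤ),(p:ℤ))) hull hSne hTne (sup2 hq hpq) (sup3 hq hpq)
      (by rw [mem_Vs]; tauto) (by simp [dot]; try ring) (by simp [dot]; try ring)
      (uniq3 hq hpq) ha2 ha3 hb2 hb3
  obtain ⟨s4, t4, hs4S, ht4T, hst4, hs4n3, hs4n4, ht4n3, ht4n4⟩ :=
    vertex_split (A := ((p-q-1:ℤ),(p-q:ℤ))) hull hSne hTne (sup3 hq hpq) (sup4 hq hpq)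
      (by rw [mem_Vs]; tauto) (by simp [dot]; try ring) (by simp [dot]; try ring)
      (uniq4 hq hpq) ha3 ha4 hb3 hb4
  -- edge analysis
  have D1 := edge_split hull hSne hTne (sup1 hq hpq) (fx1 hq hpq) (fn1 hq hpq)
    (by norm_num) (by simp [crossZ]) ha1 hb1
  have D2 := edge_split hull hSne hTne (sup2 hq hpq) (fx2 hq hpq) (fn2 hq hpq)
    (by norm_num) (by simp [crossZ]; try ring) ha2 hb2
  have D3 := edge_split hull hSne hTne (sup3 hq hpq) (fx3 hq hpq) (fn3 hq hpq)
    (by norm_num) (by simp [crossZ]; try ring) ha3 hb3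
  have D4 := edge_split hull hSne hTne (sup4 hq hpq) (fx4 hq hpq) (fn4 hq hpq)
    (by norm_num) (by simp [crossZ]; try ring) ha4 hb4
  have E1 : s1 = s2 ∨ t1 = t2 := by
    rcases D1 with hD | hD
    · exact Or.inl (hD s1 hs1S s2 hs2S hs1n1 hs2n1)
    · exact Or.inr (hD t1 ht1T t2 ht2T ht1n1 ht2n1)
  have E2 : s2 = s3 ∨ t2 = t3 := by
    rcases D2 with hD | hD
    · exact Or.inl (hD s2 hs2S s3 hs3S hs2n2 hs3n2)
    · exact Or.inr (hD t2 ht2T t3 ht3T ht2n2 ht3n2)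
  have E3 : s3 = s4 ∨ t3 = t4 := by
    rcases D3 with hD | hD
    · exact Or.inl (hD s3 hs3S s4 hs4S hs3n3 hs4n3)
    · exact Or.inr (hD t3 ht3T t4 ht4T ht3n3 ht4n3)
  have E4 : s4 = s1 ∨ t4 = t1 := by
    rcases D4 with hD | hD
    · exact Or.inl (hD s4 hs4S s1 hs1S hs4n4 hs1n4)
    · exact Or.inr (hD t4 ht4T t1 ht1T ht4n4 ht1n4)
  have key := key_lemma hq hpq s1 s2 s3 s4 t1 t2 t3 t4 hst1 hst2 hst3 hst4 E1 E2 E3 E4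
  rcases key with ⟨k1, k2, k3⟩ | ⟨k1, k2, k3⟩
  · -- S is a subsingleton
    left
    have hd1 : dot (0,-1) s1 = a1 := hs1n1
    have hd2 : dot (p,1-p) s1 = a2 := by rw [k1]; exact hs2n2
    have hd3 : dot (-q,q+1) s1 = a3 := by rw [k1, k2]; exact hs3n3
    have hd4 : dot (q-p,p-q-1) s1 = a4 := hs1n4
    have hpoint : ∀ u ∈ S, u = s1 := fun u hu => dominated_eq hq
      (hd1 ▸ ha1.1 u hu) (hd2 ▸ ha2.1 u hu) (hd3 ▸ ha3.1 u hu) (hd4 ▸ ha4.1 u hu)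
    intro u hu v hv
    rw [hpoint u hu, hpoint v hv]
  · -- T is a subsingleton
    right
    have hd1 : dot (0,-1) t1 = b1 := ht1n1
    have hd2 : dot (p,1-p) t1 = b2 := by rw [k1]; exact ht2n2
    have hd3 : dot (-q,q+1) t1 = b3 := by rw [k1, k2]; exact ht3n3
    have hd4 : dot (q-p,p-q-1) t1 = b4 := ht1n4
    have hpoint : ∀ u ∈ T, u = t1 := fun u hu => dominated_eq hq
      (hd1 ▸ hb1.1 u hu) (hd2 ▸ hb2.1 u hu) (hd3 ▸ hb3.1 u hu) (hd4 ▸ hb4.1 u hu)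
    intro u hu v hv
    rw [hpoint u hu, hpoint v hv]


def toRHom : (ℤ × ℤ) →+ V := AddMonoidHom.mk' toR toR_add

lemma image_toR_add (X Y : Finset (ℤ × ℤ)) :
    toR '' (((X + Y : Finset (ℤ × ℤ))) : Set (ℤ × ℤ)) = toR '' ↑X + toR '' ↑Y := by
  rw [Finset.coe_add]
  exact Set.image_add toRHom

lemma coe_Vs (p q : ℤ) :
    ((Vs p q : Finset (ℤ × ℤ)) : Set (ℤ × ℤ))
      = ({(0, 0), (1, 0), (p, p), (p - q - 1, p - q)} : Set (ℤ × ℤ)) := by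
  simp [Vs]

lemma GMSW_eq (p q : ℤ) : GMSW p q = convexHull ℝ (toR '' ((Vs p q) : Set (ℤ × ℤ))) := by
  rw [GMSW, coe_Vs]

/-- If z lies in the hull, attains the max of the functional, and the max is attained at a
unique generator, then z is that generator. -/
lemma face_extract {X : Finset (ℤ × ℤ)} {n : ℤ × ℤ} {c : ℤ} {u0 : ℤ × ℤ}
    (hu0 : u0 ∈ X) (hb : ∀ u ∈ X, dot n u ≤ c) (huniq : ∀ u ∈ X, dot n u = c → u = u0)
    {z : V} (hz : z ∈ convexHull ℝ (toR '' (X : Set (ℤ × ℤ))))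
    (hzc : (n.1 : ℝ) * z.1 + (n.2 : ℝ) * z.2 = (c : ℝ)) : z = toR u0 := by
  classical
  have hFc : (toR '' (X : Set (ℤ × ℤ))) = ((X.image toR : Finset V) : Set V) := by
    simp [Finset.coe_image]
  rw [hFc, Finset.convexHull_eq] at hz
  obtain ⟨w, hw0, hw1, hcm⟩ := hz
  rw [Finset.centerMass_eq_of_sum_1 _ _ hw1] at hcm
  set F := X.image toR with hF
  set f : V → ℝ := fun v => (n.1 : ℝ) * v.1 + (n.2 : ℝ) * v.2 with hf
  have hfy_le : ∀ y ∈ F, f y ≤ (c : ℝ) := by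
    intro y hy
    rw [hF, Finset.mem_image] at hy
    obtain ⟨u, hu, rfl⟩ := hy
    have := hb u hu
    simp only [hf, toR, dot] at this ⊢
    exact_mod_cast this
  have hfz : f z = ∑ y ∈ F, w y * f y := by
    rw [← hcm]
    simp only [hf]
    rw [Prod.fst_sum, Prod.snd_sum, Finset.mul_sum, Finset.mul_sum, ← Finset.sum_add_distrib]
    congr 1
    ext y
    simp [Prod.smul_fst, Prod.smul_snd, smul_eq_mul, id]
    ring
  have hzero : ∑ y ∈ F, w y * ((c : ℝ) - f y) = 0 := by
    have : ∑ y ∈ F, w y * ((c : ℝ) - f y)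
        = (∑ y ∈ F, w y) * c - ∑ y ∈ F, w y * f y := by
      rw [Finset.sum_mul, ← Finset.sum_sub_distrib]
      congr 1; ext y; ring
    rw [this, hw1, ← hfz]
    simp only [hf]
    rw [hzc]; ring
  have hterm : ∀ y ∈ F, w y * ((c : ℝ) - f y) = 0 :=
    (Finset.sum_eq_zero_iff_of_nonneg
      (fun y hy => mul_nonneg (hw0 y hy) (by linarith [hfy_le y hy]))).mp hzero
  have hwz : ∀ y ∈ F, y ≠ toR u0 → w y = 0 := by
    intro y hy hne
    rcases mul_eq_zero.mp (hterm y hy) with h | h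
    · exact h
    · exfalso
      rw [hF, Finset.mem_image] at hy
      obtain ⟨u, hu, rfl⟩ := hy
      have hfc : f (toR u) = (c : ℝ) := by linarith
      have : dot n u = c := by
        simp only [hf, toR, dot] at hfc ⊢
        exact_mod_cast hfc
      exact hne (congrArg toR (huniq u hu this))
  have hmemF : toR u0 ∈ F := Finset.mem_image_of_mem _ hu0
  have hw1' : w (toR u0) = 1 := by
    rw [← hw1]
    exact (Finset.sum_eq_single_of_mem _ hmemF (fun y hy hne => hwz y hy hne)).symm
  rw [← hcm]
  rw [Finset.sum_eq_single_of_mem _ hmemF (fun y hy hne => by rw [hwz y hy hne, zero_smul])]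
  rw [hw1', one_smul, id]

lemma vertex_extreme {X : Finset (ℤ × ℤ)} {n : ℤ × ℤ} {c : ℤ} {u0 : ℤ × ℤ}
    (hu0 : u0 ∈ X) (hb : ∀ u ∈ X, dot n u ≤ c) (huniq : ∀ u ∈ X, dot n u = c → u = u0)
    (hc0 : dot n u0 = c) :
    toR u0 ∈ (convexHull ℝ (toR '' (X : Set (ℤ × ℤ)))).extremePoints ℝ := by
  constructor
  · exact subset_convexHull ℝ _ ⟨u0, hu0, rfl⟩
  · intro x1 hx1 x2 hx2 hseg
    set f : V → ℝ := fun v => (n.1 : ℝ) * v.1 + (n.2 : ℝ) * v.2 with hf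
    have hlin : IsLinearMap ℝ f := by
      constructor
      · intro a b; simp [hf]; ring
      · intro r a; simp [hf]; ring
    have hbnd : ∀ z ∈ convexHull ℝ (toR '' (X : Set (ℤ × ℤ))), f z ≤ (c : ℝ) := by
      intro z hz
      have hconv : Convex ℝ {w : V | f w ≤ (c : ℝ)} := convex_halfSpace_le hlin _
      refine convexHull_min ?_ hconv hz
      rintro _ ⟨u, hu, rfl⟩
      have := hb u hu
      simp only [hf, toR, dot, mem_setOf_eq] at this ⊢
      exact_mod_cast this
    have hf1 : f x1 ≤ (c : ℝ) := hbnd x1 hx1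
    have hf2 : f x2 ≤ (c : ℝ) := hbnd x2 hx2
    obtain ⟨a, b, ha, hb', hab, hsum⟩ := hseg
    have hfu0 : f (toR u0) = (c : ℝ) := by
      simp only [hf, toR, dot] at hc0 ⊢
      exact_mod_cast hc0
    have hcomb : a * f x1 + b * f x2 = (c : ℝ) := by
      rw [← hfu0, ← hsum]
      simp only [hf, Prod.fst_add, Prod.snd_add, Prod.smul_fst, Prod.smul_snd, smul_eq_mul]
      ring
    have he1 : f x1 = (c : ℝ) := by
      by_contra hne
      have hlt : f x1 < (c : ℝ) := lt_of_le_of_ne hf1 hne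
      have h1 : a * f x1 < a * c := mul_lt_mul_of_pos_left hlt ha
      have h2 : b * f x2 ≤ b * c := mul_le_mul_of_nonneg_left hf2 hb'.le
      have h3 : a * (c : ℝ) + b * c = c := by rw [← add_mul, hab, one_mul]
      linarith
    have he2 : f x2 = (c : ℝ) := by
      by_contra hne
      have hlt : f x2 < (c : ℝ) := lt_of_le_of_ne hf2 hne
      have h1 : b * f x2 < b * c := mul_lt_mul_of_pos_left hlt hb'
      have h2 : a * f x1 ≤ a * c := mul_le_mul_of_nonneg_left hf1 ha.le
      have h3 : a * (c : ℝ) + b * c = c := by rw [← add_mul, hab, one_mul]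
      linarith
    exact face_extract hu0 hb huniq hx1 he1

lemma bound_c1 {p q : ℤ} (hq : 0 < q) (hpq : q < p) :
    ∀ u ∈ Vs p q, dot (q-p, p-q-2) u ≤ 0 := by
  intro u hu
  rw [mem_Vs] at hu
  rcases hu with rfl|rfl|rfl|rfl <;> simp [dot] <;> nlinarith

lemma uniqv_c1 {p q : ℤ} (hq : 0 < q) (hpq : q < p) :
    ∀ u ∈ Vs p q, dot (q-p, p-q-2) u = 0 → u = (0,0) := by
  intro u hu hc
  rw [mem_Vs] at hu
  rcases hu with rfl|rfl|rfl|rfl <;> simp [dot] at hc ⊢ <;> ring_nf (config := { ifUnchanged := .silent }) at hc ⊢ <;> omega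

lemma bound_c2 {p q : ℤ} (hq : 0 < q) (hpq : q < p) :
    ∀ u ∈ Vs p q, dot (p, -p) u ≤ p := by
  intro u hu
  rw [mem_Vs] at hu
  rcases hu with rfl|rfl|rfl|rfl <;> simp [dot] <;> nlinarith

lemma uniqv_c2 {p q : ℤ} (hq : 0 < q) (hpq : q < p) :
    ∀ u ∈ Vs p q, dot (p, -p) u = p → u = (1,0) := by
  intro u hu hc
  rw [mem_Vs] at hu
  rcases hu with rfl|rfl|rfl|rfl <;> simp [dot] at hc ⊢ <;> ring_nf (config := { ifUnchanged := .silent }) at hc ⊢ <;> omega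

lemma bound_c3 {p q : ℤ} (hq : 0 < q) (hpq : q < p) :
    ∀ u ∈ Vs p q, dot (p-q, q-p+2) u ≤ 2*p := by
  intro u hu
  rw [mem_Vs] at hu
  rcases hu with rfl|rfl|rfl|rfl <;> simp [dot] <;> nlinarith

lemma uniqv_c3 {p q : ℤ} (hq : 0 < q) (hpq : q < p) :
    ∀ u ∈ Vs p q, dot (p-q, q-p+2) u = 2*p → u = (p,p) := by
  intro u hu hc
  rw [mem_Vs] at hu
  rcases hu with rfl|rfl|rfl|rfl <;> simp [dot] at hc ⊢ <;> ring_nf at hc ⊢ <;> omega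

lemma bound_c4 {p q : ℤ} (hq : 0 < q) (hpq : q < p) :
    ∀ u ∈ Vs p q, dot (-p, p) u ≤ p := by
  intro u hu
  rw [mem_Vs] at hu
  rcases hu with rfl|rfl|rfl|rfl <;> simp [dot] <;> nlinarith

lemma uniqv_c4 {p q : ℤ} (hq : 0 < q) (hpq : q < p) :
    ∀ u ∈ Vs p q, dot (-p, p) u = p → u = (p-q-1,p-q) := by
  intro u hu hc
  rw [mem_Vs] at hu
  rcases hu with rfl|rfl|rfl|rfl <;> simp [dot] at hc ⊢ <;> ring_nf at hc ⊢ <;> omega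

lemma ext_GMSW {p q : ℤ} (hq : 0 < q) (hpq : q < p) :
    (GMSW p q).extremePoints ℝ = toR '' ((Vs p q) : Set (ℤ × ℤ)) := by
  rw [GMSW_eq]
  apply Subset.antisymm
  · exact extremePoints_convexHull_subset
  · rintro x ⟨u, hu, rfl⟩
    rw [Finset.mem_coe, mem_Vs] at hu
    rcases hu with rfl|rfl|rfl|rfl
    · exact vertex_extreme (by rw [mem_Vs]; tauto) (bound_c1 hq hpq) (uniqv_c1 hq hpq)
        (by simp [dot])
    · exact vertex_extreme (by rw [mem_Vs]; tauto) (bound_c2 hq hpq) (uniqv_c2 hq hpq)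
        (by simp [dot])
    · exact vertex_extreme (by rw [mem_Vs]; tauto) (bound_c3 hq hpq) (uniqv_c3 hq hpq)
        (by simp [dot]; ring)
    · exact vertex_extreme (by rw [mem_Vs]; tauto) (bound_c4 hq hpq) (uniqv_c4 hq hpq)
        (by simp [dot]; ring)

lemma para_core {p q : ℤ} (hq : 0 < q) (hpq : q < p) (B0 B1 B2 B3 : ℤ × ℤ)
    (h0 : B0 = (0,0) ∨ B0 = (1,0) ∨ B0 = (p,p) ∨ B0 = (p-q-1,p-q))
    (h1 : B1 = (0,0) ∨ B1 = (1,0) ∨ B1 = (p,p) ∨ B1 = (p-q-1,p-q))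
    (h2 : B2 = (0,0) ∨ B2 = (1,0) ∨ B2 = (p,p) ∨ B2 = (p-q-1,p-q))
    (h3 : B3 = (0,0) ∨ B3 = (1,0) ∨ B3 = (p,p) ∨ B3 = (p-q-1,p-q))
    (ne01 : B0 ≠ B1) (ne03 : B0 ≠ B3) (ne12 : B1 ≠ B2) (ne23 : B2 ≠ B3)
    (hs : B0 + B2 = B1 + B3) : False := by
  simp only [Prod.ext_iff, Prod.fst_add, Prod.snd_add, ne_eq, not_and] at *
  omega

lemma notpara {p q : ℤ} (hq : 0 < q) (hpq : q < p) : ¬ IsParallelogram (GMSW p q) := by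
  rintro ⟨w, hinj, hext, hsum⟩
  rw [ext_GMSW hq hpq] at hext
  have hmem : ∀ i : Fin 4, ∃ b ∈ Vs p q, toR b = w i := by
    intro i
    have : w i ∈ toR '' ((Vs p q) : Set (ℤ × ℤ)) := by rw [hext]; exact ⟨i, rfl⟩
    obtain ⟨b, hb, he⟩ := this
    exact ⟨b, hb, he⟩
  choose B hBmem hBw using hmem
  have hBsum : B 0 + B 2 = B 1 + B 3 := by
    apply toR_inj
    rw [toR_add, toR_add, hBw 0, hBw 2, hBw 1, hBw 3]
    exact hsum
  have hne : ∀ i j : Fin 4, i ≠ j → B i ≠ B j := by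
    intro i j hij hbe
    exact hij (hinj (by rw [← hBw i, ← hBw j, hbe]))
  exact para_core hq hpq (B 0) (B 1) (B 2) (B 3)
    (mem_Vs.mp (hBmem 0)) (mem_Vs.mp (hBmem 1)) (mem_Vs.mp (hBmem 2)) (mem_Vs.mp (hBmem 3))
    (hne 0 1 (by decide)) (hne 0 3 (by decide)) (hne 1 2 (by decide)) (hne 2 3 (by decide))
    hBsum

lemma hull_of_subsingleton {S : Finset (ℤ × ℤ)} (hne : S.Nonempty)
    (hss : ∀ u ∈ S, ∀ v ∈ S, u = v) : ∃ x, convexHull ℝ (toR '' (S : Set (ℤ × ℤ))) = {x} := by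
  obtain ⟨s, hs⟩ := hne
  refine ⟨toR s, ?_⟩
  have hSs : (S : Set (ℤ × ℤ)) = {s} := by
    ext u
    simp only [Finset.mem_coe, mem_singleton_iff]
    exact ⟨fun hu => hss u hu s hs, fun h => h ▸ hs⟩
  rw [hSs, Set.image_singleton, convexHull_singleton]

lemma part2 {p q : ℤ} (hq : 0 < q) (hpq : q < p) :
    ¬ ∃ A B : Set V, IsLatticePolytope A ∧ IsLatticePolytope B ∧
        (¬ ∃ x, A = {x}) ∧ (¬ ∃ x, B = {x}) ∧ GMSW p q = A + B := by
  rintro ⟨A, B, ⟨S, hSne, rfl⟩, ⟨T, hTne, rfl⟩, hA, hB, hG⟩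
  have hull : convexHull ℝ (toR '' ((S + T : Finset (ℤ × ℤ)) : Set (ℤ × ℤ)))
      = convexHull ℝ (toR '' ((Vs p q) : Set (ℤ × ℤ))) := by
    rw [image_toR_add, convexHull_add, ← hG, GMSW_eq]
  rcases decomp_core hq hpq hSne hTne hull with hss | hss
  · exact hA (hull_of_subsingleton hSne hss)
  · exact hB (hull_of_subsingleton hTne hss)

lemma latticePolytope_add {A B : Set V} (hA : IsLatticePolytope A) (hB : IsLatticePolytope B) :
    IsLatticePolytope (A + B) := by
  obtain ⟨S, hSne, rfl⟩ := hA
  obtain ⟨T, hTne, rfl⟩ := hB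
  exact ⟨S + T, hSne.add hTne, by rw [image_toR_add, convexHull_add]⟩

lemma latticePolytope_of_seg_or_tri {L : Set V}
    (h : IsLatticeSegment L ∨ IsLatticeTriangle L) : IsLatticePolytope L := by
  rcases h with ⟨a, b, hab, rfl⟩ | ⟨a, b, c, hind, rfl⟩
  · refine ⟨{a, b}, ⟨a, by simp⟩, ?_⟩
    rw [show (toR '' (({a, b} : Finset (ℤ × ℤ)) : Set (ℤ × ℤ))) = {toR a, toR b} by
        simp [Set.image_insert_eq],
      convexHull_pair]
  · refine ⟨{a, b, c}, ⟨a, by simp⟩, ?_⟩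
    rw [show (toR '' (({a, b, c} : Finset (ℤ × ℤ)) : Set (ℤ × ℤ))) = {toR a, toR b, toR c} by
      simp [Set.image_insert_eq]]

lemma latticePolytope_nonempty {P : Set V} (h : IsLatticePolytope P) : P.Nonempty := by
  obtain ⟨S, ⟨s, hs⟩, rfl⟩ := h
  exact ⟨toR s, subset_convexHull ℝ _ ⟨s, hs, rfl⟩⟩

lemma sum_latticePolytope : ∀ (k : ℕ) (Ps : Fin (k + 1) → Set V),
    (∀ i, IsLatticePolytope (Ps i)) → IsLatticePolytope (∑ i, Ps i) := by
  intro k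
  induction k with
  | zero => intro Ps h; rw [Fin.sum_univ_one]; exact h 0
  | succ n ih =>
    intro Ps h
    rw [Fin.sum_univ_succ]
    exact latticePolytope_add (h 0) (ih _ (fun i => h i.succ))

lemma two_points_of_seg_or_tri {L : Set V}
    (h : IsLatticeSegment L ∨ IsLatticeTriangle L) :
    ∃ x y, x ∈ L ∧ y ∈ L ∧ x ≠ y := by
  rcases h with ⟨a, b, hab, rfl⟩ | ⟨a, b, c, hind, rfl⟩
  · exact ⟨toR a, toR b, left_mem_segment ℝ _ _, right_mem_segment ℝ _ _,
      fun he => hab (toR_inj he)⟩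
  · refine ⟨toR a, toR b, subset_convexHull ℝ _ (by simp), subset_convexHull ℝ _ (by simp), ?_⟩
    have := hind.injective.ne (show (0 : Fin 3) ≠ 1 by decide)
    simpa using this

lemma not_single_of_two_mem {A : Set V} {x y : V} (hx : x ∈ A) (hy : y ∈ A) (hxy : x ≠ y) :
    ¬ ∃ z, A = {z} := by
  rintro ⟨z, rfl⟩
  exact hxy (hx.trans hy.symm)

lemma sum_nonempty : ∀ (k : ℕ) (Qs : Fin k → Set V),
    (∀ i, (Qs i).Nonempty) → (∑ i, Qs i).Nonempty := by
  intro k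
  induction k with
  | zero =>
    intro Qs h
    rw [Finset.univ_eq_empty, Finset.sum_empty]
    exact ⟨0, Set.mem_zero.mpr rfl⟩
  | succ n ih =>
    intro Qs h
    rw [Fin.sum_univ_succ]
    exact (h 0).add (ih _ (fun i => h i.succ))

lemma part3 {p q : ℤ} (hq : 0 < q) (hpq : q < p) :
    ¬ HasLatticeMaximalDecomposition (GMSW p q) := by
  rintro ⟨m, Ps, hm, hsum, hkind⟩
  obtain ⟨j, rfl⟩ : ∃ j, m = j + 1 := ⟨m - 1, by omega⟩
  have hlat : ∀ k, IsLatticePolytope (Ps k) := fun k => latticePolytope_of_seg_or_tri (hkind k)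
  set B : Set V := ∑ i : Fin (j + 1), Ps i.succ with hB
  have hsum' : GMSW p q = Ps 0 + B := by rw [hsum, Fin.sum_univ_succ]
  have hBlat : IsLatticePolytope B := sum_latticePolytope _ _ (fun i => hlat i.succ)
  have hAnot : ¬ ∃ x, Ps 0 = {x} := by
    obtain ⟨x, y, hx, hy, hxy⟩ := two_points_of_seg_or_tri (hkind 0)
    exact not_single_of_two_mem hx hy hxy
  have hBnot : ¬ ∃ x, B = {x} := by
    have hBsplit : B = Ps ((0 : Fin (j + 1)).succ) + ∑ i : Fin j, Ps i.succ.succ := by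
      rw [hB, Fin.sum_univ_succ]
    obtain ⟨x, y, hx, hy, hxy⟩ := two_points_of_seg_or_tri (hkind ((0 : Fin (j + 1)).succ))
    have hCne : (∑ i : Fin j, Ps (i.succ.succ)).Nonempty :=
      sum_nonempty _ _ (fun i => latticePolytope_nonempty (hlat i.succ.succ))
    obtain ⟨c, hc⟩ := hCne
    rintro ⟨z, hz⟩
    have h1 : x + c ∈ B := by rw [hBsplit]; exact add_mem_add hx hc
    have h2 : y + c ∈ B := by rw [hBsplit]; exact add_mem_add hy hc
    rw [hz] at h1 h2
    exact hxy (add_right_cancel (h1.trans h2.symm))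
  exact part2 hq hpq ⟨Ps 0, B, hlat 0, hBlat, hAnot, hBnot, hsum'⟩


end S15

/-- For `p > q > 0`, the toric diagram `𝒴^{p,q}` is not a parallelogram and
admits no Minkowski decomposition into two lattice polytopes neither of which is a single
point; in particular it admits no lattice maximal Minkowski decomposition. -/
theorem statement15 (p q : ℤ) (hq : 0 < q) (hpq : q < p) :
    ¬ IsParallelogram (GMSW p q) ∧
    (¬ ∃ A B : Set V, IsLatticePolytope A ∧ IsLatticePolytope B ∧
        (¬ ∃ x, A = {x}) ∧ (¬ ∃ x, B = {x}) ∧ GMSW p q = A + B) ∧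
    ¬ HasLatticeMaximalDecomposition (GMSW p q) :=
  ⟨S15.notpara hq hpq, S15.part2 hq hpq, S15.part3 hq hpq⟩
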